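/- Let V be a finite-dimensional real vector space with full-rank lattice L, and let L* ⊂ V* be the dual lattice. Let C ⊂ V be a nonempty open proper cone with dual cone C* = {ξ ∈ V* : ⟨ξ, x⟩ > 0 for all x ∈ C \ {0}}. Then for every ξ ∈ C* ∩ L* there exists v ∈ C ∩ L such that the affine hyperplane ξ + v^⊥ = {λ ∈ V* : ⟨λ − ξ, v⟩ = 0} intersects C* ∩ L* only in the point ξ. -/

import Mathlib

open Module Set

section Helpers

variable {V : Type*} [NormedAddCommGroup V] [NormedSpace ℝ V]
  {ι : Type*} [Fintype ι]

/-- A lattice point within bounded distance of any point. -/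
lemma near_lattice (b : Basis ι ℝ V) (x : V) :
    ∃ q ∈ Submodule.span ℤ (Set.range b), ‖x - q‖ ≤ ∑ i, ‖b i‖ := by
  refine ⟨∑ i, ((round (b.repr x i) : ℤ) : ℝ) • b i, ?_, ?_⟩
  · refine Submodule.sum_mem _ fun i _ => ?_
    rw [Int.cast_smul_eq_zsmul]
    exact Submodule.smul_mem _ _ (Submodule.subset_span ⟨i, rfl⟩)
  · have hx : x = ∑ i, b.repr x i • b i := (b.sum_repr x).symm
    calc ‖x - ∑ i, ((round (b.repr x i) : ℤ) : ℝ) • b i‖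
        = ‖∑ i, (b.repr x i - (round (b.repr x i) : ℝ)) • b i‖ := by
          rw [show x - ∑ i, ((round (b.repr x i) : ℤ) : ℝ) • b i
              = ∑ i, (b.repr x i - (round (b.repr x i) : ℝ)) • b i from by
            nth_rewrite 1 [hx]
            rw [← Finset.sum_sub_distrib]
            exact Finset.sum_congr rfl fun i _ => (sub_smul _ _ _).symm]
      _ ≤ ∑ i, ‖(b.repr x i - (round (b.repr x i) : ℝ)) • b i‖ := norm_sum_le _ _
      _ ≤ ∑ i, ‖b i‖ := by
          refine Finset.sum_le_sum fun i _ => ?_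
          rw [norm_smul]
          have h1 : ‖b.repr x i - (round (b.repr x i) : ℝ)‖ ≤ 1 := by
            rw [Real.norm_eq_abs]
            have := abs_sub_round (b.repr x i)
            linarith
          nlinarith [norm_nonneg (b i)]

/-- Any nonempty open cone contains a lattice point. -/
lemma cone_lattice (b : Basis ι ℝ V) {S : Set V} (hS : IsOpen S)
    (hcone : ∀ x ∈ S, ∀ t : ℝ, 0 < t → t • x ∈ S) {p : V} (hp : p ∈ S) :
    ∃ q ∈ S, q ∈ Submodule.span ℤ (Set.range b) := by
  obtain ⟨ε, hε, hball⟩ := Metric.isOpen_iff.1 hS p hp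
  set R := ∑ i, ‖b i‖ with hR
  have hR0 : 0 ≤ R := Finset.sum_nonneg fun i _ => norm_nonneg _
  set t : ℝ := (R + 1) / ε with ht
  have ht0 : 0 < t := div_pos (by linarith) hε
  obtain ⟨q, hqL, hq⟩ := near_lattice b (t • p)
  have hlt : ‖t • p - q‖ < t * ε := by
    have : t * ε = R + 1 := by rw [ht]; field_simp
    rw [this]; linarith
  have hmem : t⁻¹ • q ∈ Metric.ball p ε := by
    rw [Metric.mem_ball, dist_eq_norm]
    have : t⁻¹ • q - p = (-t⁻¹) • (t • p - q) := by
      rw [neg_smul, smul_sub, smul_smul, inv_mul_cancel₀ ht0.ne', one_smul]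
      abel
    rw [this, norm_smul, norm_neg, Real.norm_eq_abs, abs_of_pos (inv_pos.2 ht0)]
    calc t⁻¹ * ‖t • p - q‖ < t⁻¹ * (t * ε) := by
          exact mul_lt_mul_of_pos_left hlt (inv_pos.2 ht0)
      _ = ε := by field_simp
  refine ⟨q, ?_, hqL⟩
  have := hcone _ (hball hmem) t ht0
  rwa [smul_inv_smul₀ ht0.ne'] at this

lemma dense_ne_zero [FiniteDimensional ℝ V] {f : Module.Dual ℝ V} (hf : f ≠ 0) :
    Dense {x : V | f x ≠ 0} ∧ IsOpen {x : V | f x ≠ 0} := by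
  have hc : Continuous f := f.continuous_of_finiteDimensional
  have hopen : IsOpen {x : V | f x ≠ 0} := isOpen_compl_iff.2 (isClosed_singleton.preimage hc)
  refine ⟨?_, hopen⟩
  have hcompl : {x : V | f x ≠ 0}ᶜ = (LinearMap.ker f : Set V) := by
    ext x; simp [LinearMap.mem_ker]
  have hint : interior ((LinearMap.ker f : Set V)) = ∅ := by
    by_contra h
    have := (LinearMap.ker f).eq_top_of_nonempty_interior'
      (Set.nonempty_iff_ne_empty.2 h)
    exact hf (LinearMap.ker_eq_top.1 this)
  have hd := interior_eq_empty_iff_dense_compl.1 hint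
  rwa [← hcompl, compl_compl] at hd

lemma dense_avoid [FiniteDimensional ℝ V] (F : Finset (Module.Dual ℝ V))
    (hF : ∀ f ∈ F, f ≠ 0) :
    Dense {x : V | ∀ f ∈ F, f x ≠ 0} ∧ IsOpen {x : V | ∀ f ∈ F, f x ≠ 0} := by
  classical
  induction F using Finset.induction_on with
  | empty => simpa using ⟨dense_univ, isOpen_univ⟩
  | @insert a s hnot ih =>
    have ha : a ≠ 0 := hF a (Finset.mem_insert_self a s)
    have hs := ih fun f hf => hF f (Finset.mem_insert_of_mem hf)
    have hset : {x : V | ∀ f ∈ insert a s, f x ≠ 0}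
        = {x : V | a x ≠ 0} ∩ {x : V | ∀ f ∈ s, f x ≠ 0} := by
      ext x; simp [Finset.mem_insert]
    obtain ⟨hd, ho⟩ := dense_ne_zero ha
    rw [hset]
    exact ⟨hd.inter_of_isOpen_left hs.1 ho, ho.inter hs.2⟩

lemma finite_bounded_int (b : Basis ι ℝ V) (M : ℝ) :
    {l : Module.Dual ℝ V | (∀ i, ∃ n : ℤ, l (b i) = n) ∧ ∀ i, |l (b i)| ≤ M}.Finite := by
  classical
  set G := {l : Module.Dual ℝ V | (∀ i, ∃ n : ℤ, l (b i) = n) ∧ ∀ i, |l (b i)| ≤ M}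
  have key : ∀ l ∈ G, ∀ i, ((round (l (b i)) : ℤ) : ℝ) = l (b i) := by
    intro l hl i
    obtain ⟨n, hn⟩ := hl.1 i
    rw [hn, round_intCast]
  apply Set.Finite.of_finite_image (f := fun l => fun i => round (l (b i)))
  · apply Set.Finite.subset (Set.Finite.pi (t := fun _ : ι => Set.Icc (-⌈M⌉) ⌈M⌉)
      fun i => Set.finite_Icc _ _)
    rintro g ⟨l, hl, rfl⟩
    intro i _
    simp only [Set.mem_Icc]
    have h1 := hl.2 i
    have h2 := key l hl i
    constructor
    · have : (-⌈M⌉ : ℝ) ≤ (round (l (b i)) : ℝ) := by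
        rw [h2]
        have := Int.le_ceil M
        have := abs_le.1 h1
        push_cast
        linarith
      exact_mod_cast this
    · have : ((round (l (b i)) : ℤ) : ℝ) ≤ (⌈M⌉ : ℝ) := by
        rw [h2]
        have := Int.le_ceil M
        have := abs_le.1 h1
        linarith
      exact_mod_cast this
  · intro l₁ h₁ l₂ h₂ heq
    apply b.ext
    intro i
    have := congrFun heq i
    have e1 := key l₁ h₁ i
    have e2 := key l₂ h₂ i
    simp only at this
    rw [← e1, ← e2, this]

end Helpers

/-- For every dual-lattice point ξ in the dual cone C* of a nonempty open proper
cone C, there is a lattice point v ∈ C ∩ L such that the affine hyperplane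
ξ + v^⊥ meets C* ∩ L* only in ξ. -/
theorem stmt_1 {V : Type*} [NormedAddCommGroup V] [NormedSpace ℝ V]
    {ι : Type*} [Fintype ι] (b : Basis ι ℝ V)
    (C : Set V) (hCopen : IsOpen C) (hCne : C.Nonempty)
    (hCcone : ∀ x ∈ C, ∀ t : ℝ, 0 < t → t • x ∈ C)
    (hproper : ∃ η : Module.Dual ℝ V, ∀ x ∈ C, x ≠ 0 → 0 < η x)
    (ξ : Module.Dual ℝ V)
    (hξC : ∀ x ∈ C, x ≠ 0 → 0 < ξ x)
    (hξL : ∀ w ∈ Submodule.span ℤ (Set.range b), ∃ n : ℤ, ξ w = n) :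
    ∃ v, v ∈ C ∧ v ∈ Submodule.span ℤ (Set.range b) ∧
      ∀ lam : Module.Dual ℝ V,
        (∀ x ∈ C, x ≠ 0 → 0 < lam x) →
        (∀ w ∈ Submodule.span ℤ (Set.range b), ∃ n : ℤ, lam w = n) →
        (lam - ξ) v = 0 → lam = ξ := by
  classical
  haveI : FiniteDimensional ℝ V := Module.Finite.of_basis b
  by_cases h0 : (0 : V) ∈ C
  · -- degenerate case: 0 ∈ C forces V = 0
    obtain ⟨η, hη⟩ := hproper
    have hV : ∀ x : V, x = 0 := by
      intro x
      by_contra hx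
      obtain ⟨r, hr, hball⟩ := Metric.isOpen_iff.1 hCopen 0 h0
      have hxn : 0 < ‖x‖ := norm_pos_iff.2 hx
      set s : ℝ := r / (2 * ‖x‖) with hs
      have hs0 : 0 < s := div_pos hr (by positivity)
      have hnorm : ‖s • x‖ < r := by
        rw [norm_smul, Real.norm_eq_abs, abs_of_pos hs0, hs]
        rw [div_mul_eq_mul_div, mul_comm]
        rw [div_lt_iff₀ (by positivity)]
        nlinarith
      have h1 : s • x ∈ C := hball (by simpa [Metric.mem_ball, dist_eq_norm] using hnorm)
      have h2 : -(s • x) ∈ C := hball (by simpa [Metric.mem_ball, dist_eq_norm] using hnorm)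
      have hne : s • x ≠ 0 := smul_ne_zero hs0.ne' hx
      have p1 := hη _ h1 hne
      have p2 := hη _ h2 (neg_ne_zero.2 hne)
      rw [map_neg] at p2
      linarith
    refine ⟨0, h0, Submodule.zero_mem _, fun lam _ _ _ => ?_⟩
    apply LinearMap.ext
    intro x
    rw [hV x, map_zero, map_zero]
  · -- main case: 0 ∉ C
    have hC0 : ∀ x ∈ C, x ≠ 0 := fun x hx h => h0 (h ▸ hx)
    obtain ⟨p₀, hp₀⟩ := hCne
    obtain ⟨v₁, hv₁C, hv₁L⟩ := cone_lattice b hCopen hCcone hp₀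
    obtain ⟨δ, hδ, hball⟩ := Metric.isOpen_iff.1 hCopen v₁ hv₁C
    set ε : ℝ := δ / 3 with hε
    have hε0 : 0 < ε := by positivity
    have hmemC : ∀ u : V, ‖u‖ ≤ 2 * ε → v₁ + u ∈ C := by
      intro u hu
      apply hball
      rw [Metric.mem_ball, dist_eq_norm, add_sub_cancel_left]
      calc ‖u‖ ≤ 2 * ε := hu
        _ < δ := by rw [hε]; linarith
    -- key estimate: any dual-cone functional satisfies |lam u| ≤ lam v₁ for ‖u‖ ≤ 2ε
    have key : ∀ lam : Module.Dual ℝ V, (∀ x ∈ C, x ≠ 0 → 0 < lam x) →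
        ∀ u : V, ‖u‖ ≤ 2 * ε → |lam u| ≤ lam v₁ := by
      intro lam hlam u hu
      have h1 : 0 < lam (v₁ + u) := hlam _ (hmemC u hu) (hC0 _ (hmemC u hu))
      have h2 : 0 < lam (v₁ + (-u)) := by
        refine hlam _ (hmemC (-u) (by rwa [norm_neg])) (hC0 _ (hmemC (-u) (by rwa [norm_neg])))
      rw [map_add] at h1 h2
      rw [map_neg] at h2
      exact abs_le.2 ⟨by linarith, by linarith⟩
    have key2 : ∀ lam : Module.Dual ℝ V, (∀ x ∈ C, x ≠ 0 → 0 < lam x) →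
        ∀ w : V, ‖w‖ ≤ ε → |lam w| ≤ lam v₁ / 2 := by
      intro lam hlam w hw
      have h := key lam hlam ((2 : ℝ) • w) (by rw [norm_smul]; simp; linarith)
      rw [map_smul, smul_eq_mul, abs_mul, abs_of_pos (by norm_num : (0:ℝ) < 2)] at h
      linarith
    have hξv₁ : 0 < ξ v₁ := hξC v₁ hv₁C (hC0 _ hv₁C)
    -- the finite set G of potential bad functionals
    set G : Set (Module.Dual ℝ V) := {l | (∀ x ∈ C, x ≠ 0 → 0 < l x) ∧
        (∀ w ∈ Submodule.span ℤ (Set.range b), ∃ n : ℤ, l w = n) ∧ l v₁ ≤ 3 * ξ v₁} with hG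
    have hGfin : G.Finite := by
      apply Set.Finite.subset (finite_bounded_int b ((3 * ξ v₁) * (∑ i, ‖b i‖) / (2 * ε)))
      rintro l ⟨hl1, hl2, hl3⟩
      refine ⟨fun i => hl2 (b i) (Submodule.subset_span ⟨i, rfl⟩), fun i => ?_⟩
      have hbne : b i ≠ 0 := b.ne_zero i
      have hbn : 0 < ‖b i‖ := norm_pos_iff.2 hbne
      have hu : ‖(2 * ε / ‖b i‖) • b i‖ ≤ 2 * ε := by
        rw [norm_smul, Real.norm_eq_abs, abs_of_pos (by positivity), div_mul_cancel₀]
        exact hbn.ne'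
      have := key l hl1 _ hu
      rw [map_smul, smul_eq_mul, abs_mul, abs_of_pos (by positivity : (0:ℝ) < 2 * ε / ‖b i‖)]
        at this
      have hsum : ‖b i‖ ≤ ∑ j, ‖b j‖ :=
        Finset.single_le_sum (fun j _ => norm_nonneg (b j)) (Finset.mem_univ i)
      rw [div_mul_eq_mul_div, div_le_iff₀ hbn] at this
      rw [le_div_iff₀ (by positivity : (0:ℝ) < 2 * ε)]
      calc |l (b i)| * (2 * ε) = 2 * ε * |l (b i)| := by ring
        _ ≤ l v₁ * ‖b i‖ := this
        _ ≤ 3 * ξ v₁ * ∑ j, ‖b j‖ := by nlinarith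
    -- functionals to avoid
    set F : Finset (Module.Dual ℝ V) := (hGfin.toFinset.erase ξ).image (fun l => l - ξ) with hF
    have hFne : ∀ f ∈ F, f ≠ 0 := by
      intro f hf
      obtain ⟨l, hl, rfl⟩ := Finset.mem_image.1 hf
      exact sub_ne_zero_of_ne (Finset.mem_erase.1 hl).1
    obtain ⟨hKdense, hKopen⟩ := dense_avoid F hFne
    -- subcone C₂
    set C₂ : Set V := {x | ∃ t : ℝ, 0 < t ∧ ∃ w : V, ‖w‖ < ε ∧ x = t • (v₁ + w)} with hC₂
    have hv₁C₂ : v₁ ∈ C₂ := ⟨1, one_pos, 0, by simpa using hε0, by simp⟩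
    have hC₂sub : C₂ ⊆ C := by
      rintro x ⟨t, ht, w, hw, rfl⟩
      exact hCcone _ (hmemC w (by linarith)) t ht
    have hC₂open : IsOpen C₂ := by
      rw [Metric.isOpen_iff]
      rintro x ⟨t, ht, w, hw, rfl⟩
      refine ⟨t * (ε - ‖w‖), mul_pos ht (by linarith), ?_⟩
      intro y hy
      rw [Metric.mem_ball, dist_eq_norm] at hy
      refine ⟨t, ht, w + t⁻¹ • (y - t • (v₁ + w)), ?_, ?_⟩
      · calc ‖w + t⁻¹ • (y - t • (v₁ + w))‖
            ≤ ‖w‖ + ‖t⁻¹ • (y - t • (v₁ + w))‖ := norm_add_le _ _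
          _ = ‖w‖ + t⁻¹ * ‖y - t • (v₁ + w)‖ := by
              rw [norm_smul, Real.norm_eq_abs, abs_of_pos (inv_pos.2 ht)]
          _ < ‖w‖ + t⁻¹ * (t * (ε - ‖w‖)) := by
              have := mul_lt_mul_of_pos_left hy (inv_pos.2 ht)
              linarith
          _ = ε := by field_simp; ring
      · rw [smul_add, smul_add, smul_inv_smul₀ ht.ne', smul_add]
        abel
    have hC₂cone : ∀ x ∈ C₂, ∀ s : ℝ, 0 < s → s • x ∈ C₂ := by
      rintro x ⟨t, ht, w, hw, rfl⟩ s hs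
      exact ⟨s * t, mul_pos hs ht, w, hw, by rw [smul_smul]⟩
    -- the good open cone S
    set S : Set V := C₂ ∩ {x | ∀ f ∈ F, f x ≠ 0} with hS
    have hSopen : IsOpen S := hC₂open.inter hKopen
    have hScone : ∀ x ∈ S, ∀ s : ℝ, 0 < s → s • x ∈ S := by
      rintro x ⟨hx1, hx2⟩ s hs
      refine ⟨hC₂cone x hx1 s hs, fun f hf => ?_⟩
      rw [map_smul, smul_eq_mul]
      exact mul_ne_zero hs.ne' (hx2 f hf)
    have hSne : ∃ p, p ∈ S := by
      obtain ⟨q, hq1, hq2⟩ := hKdense.exists_mem_open hC₂open ⟨v₁, hv₁C₂⟩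
      exact ⟨q, hq2, hq1⟩
    obtain ⟨p, hp⟩ := hSne
    obtain ⟨v, hvS, hvL⟩ := cone_lattice b hSopen hScone hp
    refine ⟨v, hC₂sub hvS.1, hvL, ?_⟩
    intro lam hlamC hlamL hlamv
    rw [LinearMap.sub_apply, sub_eq_zero] at hlamv
    -- lam is in G
    obtain ⟨t, ht, w, hw, hveq⟩ := hvS.1
    have hlamG : lam ∈ G := by
      refine ⟨hlamC, hlamL, ?_⟩
      have e1 : lam v = t * (lam v₁ + lam w) := by rw [hveq, map_smul, map_add, smul_eq_mul]
      have e2 : ξ v = t * (ξ v₁ + ξ w) := by rw [hveq, map_smul, map_add, smul_eq_mul]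
      have b1 : |lam w| ≤ lam v₁ / 2 := key2 lam hlamC w hw.le
      have b2 : |ξ w| ≤ ξ v₁ / 2 := key2 ξ hξC w hw.le
      have hb1 := abs_le.1 b1
      have hb2 := abs_le.1 b2
      have : t * (lam v₁ + lam w) = t * (ξ v₁ + ξ w) := by rw [← e1, ← e2, hlamv]
      nlinarith
    by_contra hne
    have hfF : lam - ξ ∈ F := by
      rw [hF]
      exact Finset.mem_image.2 ⟨lam, Finset.mem_erase.2 ⟨hne, hGfin.mem_toFinset.2 hlamG⟩, rfl⟩
    have := hvS.2 (lam - ξ) hfF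
    rw [LinearMap.sub_apply] at this
    exact this (sub_eq_zero.2 hlamv)
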